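/- Let μ be a Borel probability measure on ℝ with CDF P(x) = μ((−∞,x]) and let x ∈ [0,1] be a strongly stable fixed point of P. Then for every η > 0 there exists N₀ such that for every N ≥ N₀, in the complete-graph network on N agents (weights g i j = 1 for i ≠ j, so that βᵢ(a) = (1/(N−1))·Σ_{j≠i} a j and Av(a) = (1/N)·Σ_i aᵢ), the μ^⊗N-probability of the set of threshold profiles t for which there exists a pure upper equilibrium a : Fin N → {0,1} with |Av(a) − x| ≤ η is at least 1 − η. -/

import Mathlib

open MeasureTheory Finset

/-- A weighted network on `N` agents. -/
structure Network (N : ℕ) where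
  g : Fin N → Fin N → ℝ
  symm : ∀ i j, g i j = g j i
  nonneg : ∀ i j, 0 ≤ g i j
  diag : ∀ i, g i i = 0
  degPos : ∀ i, 0 < ∑ j, g i j

namespace Network

variable {N : ℕ}

/-- Degree of agent `i`. -/
noncomputable def deg (G : Network N) (i : Fin N) : ℝ := ∑ j, G.g i j

/-- Weighted average action `Av`. -/
noncomputable def Av (G : Network N) (a : Fin N → ℝ) : ℝ :=
  (∑ i, G.deg i * a i) / (∑ i, G.deg i)

/-- Neighborhood average `βᵢ(a)`. -/
noncomputable def nbr (G : Network N) (a : Fin N → ℝ) (i : Fin N) : ℝ :=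
  (∑ j, G.g i j * a j) / G.deg i

/-- Weighted distance between profiles. -/
noncomputable def wdist (G : Network N) (a b : Fin N → ℝ) : ℝ :=
  Real.sqrt ((∑ i, (G.deg i) ^ 2 * (a i - b i) ^ 2) / (∑ i, (G.deg i) ^ 2))

/-- Fineness `d(g) = max_{i,j} g i j / gᵢ`. -/
noncomputable def fineness (G : Network N) : ℝ := ⨆ i, ⨆ j, G.g i j / G.deg i

/-- Degree inequality `w(g) = max gᵢ / min gᵢ`. -/
noncomputable def imbalance (G : Network N) : ℝ := (⨆ i, G.deg i) / (⨅ i, G.deg i)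

/-- Balanced network: all degrees equal. -/
def Balanced (G : Network N) : Prop := ∀ i j, G.deg i = G.deg j

end Network

/-- Pure upper equilibrium for threshold profile `t`. -/
def IsUpperEq {N : ℕ} (G : Network N) (t a : Fin N → ℝ) : Prop :=
  (∀ i, a i = 0 ∨ a i = 1) ∧ ∀ i, (a i = 1 ↔ t i ≤ G.nbr a i)

/-- Mixed equilibrium for threshold profile `t`. -/
def IsMixedEq {N : ℕ} (G : Network N) (t a : Fin N → ℝ) : Prop :=
  (∀ i, a i ∈ Set.Icc (0 : ℝ) 1) ∧
    ∀ i, (t i < G.nbr a i → a i = 1) ∧ (G.nbr a i < t i → a i = 0)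

/-- The CDF of a measure. -/
noncomputable def cdf (μ : Measure ℝ) (x : ℝ) : ℝ := (μ (Set.Iic x)).toReal

/-- `x` is a strongly stable fixed point of `P`. -/
def StronglyStable (P : ℝ → ℝ) (x : ℝ) : Prop :=
  P x = x ∧ ∃ γ < (1 : ℝ), ∃ ε > (0 : ℝ), ∀ y ∈ Set.Icc (0 : ℝ) 1, |y - x| ≤ ε →
    (y ≤ x → P x + γ * (y - x) ≤ P y) ∧ (x ≤ y → P y ≤ P x + γ * (y - x))

/-- The complete graph network on `N ≥ 2` agents: `g i j = 1` for `i ≠ j`. -/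
noncomputable def completeNetwork (N : ℕ) (hN : 2 ≤ N) : Network N where
  g i j := if i = j then 0 else 1
  symm := by
    intro i j
    by_cases h : i = j <;> simp [h, eq_comm]
  nonneg := by intro i j; split <;> norm_num
  diag := by intro i; simp
  degPos := by
    intro i
    have key : ∀ j : Fin N, (if i = j then (0 : ℝ) else 1) = 1 - (if i = j then 1 else 0) := by
      intro j; split <;> ring
    rw [Finset.sum_congr rfl fun j _ => key j, Finset.sum_sub_distrib,
      Finset.sum_const, Finset.sum_ite_eq]
    simp only [Finset.mem_univ, if_true, Finset.card_univ, Fintype.card_fin, nsmul_eq_mul,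
      mul_one]
    have : (2 : ℝ) ≤ (N : ℝ) := by exact_mod_cast hN
    linarith


/-! ### Auxiliary machinery -/

noncomputable def cnt (N : ℕ) (c : ℝ) (t : Fin N → ℝ) : ℝ :=
  ∑ i, if t i ≤ c then (1:ℝ) else 0

lemma cnt_eq_card (N : ℕ) (c : ℝ) (t : Fin N → ℝ) :
    cnt N c t = ((Finset.univ.filter (fun i => t i ≤ c)).card : ℝ) := by
  rw [cnt, Finset.sum_boole]

lemma cnt_nonneg (N : ℕ) (c : ℝ) (t : Fin N → ℝ) : 0 ≤ cnt N c t := by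
  rw [cnt_eq_card]; positivity

lemma cnt_le (N : ℕ) (c : ℝ) (t : Fin N → ℝ) : cnt N c t ≤ N := by
  rw [cnt_eq_card]
  have : (Finset.univ.filter (fun i => t i ≤ c)).card ≤ N := by
    refine (Finset.card_filter_le _ _).trans ?_
    simp
  exact_mod_cast this

lemma cnt_measurable (N : ℕ) (c : ℝ) : Measurable (cnt N c) := by
  apply Finset.measurable_sum
  exact fun i _ => Measurable.ite (measurableSet_le (measurable_pi_apply i) measurable_const)
    measurable_const measurable_const

lemma cdf_nonneg (μ : Measure ℝ) (c : ℝ) : 0 ≤ cdf μ c := ENNReal.toReal_nonneg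

lemma cdf_le_one (μ : Measure ℝ) [IsProbabilityMeasure μ] (c : ℝ) : cdf μ c ≤ 1 := by
  rw [cdf]
  exact ENNReal.toReal_le_of_le_ofReal zero_le_one (by simpa using prob_le_one)

lemma pi_integral_prod {N : ℕ} (μ : Measure ℝ) [SigmaFinite μ] (f : Fin N → ℝ → ℝ) :
    ∫ t, (∏ i, f i (t i)) ∂(Measure.pi fun _ : Fin N => μ) = ∏ i, ∫ s, f i s ∂μ := by
  have := MeasureTheory.integral_fintype_prod_eq_prod (𝕜 := ℝ) (E := fun _ : Fin N => ℝ) f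
    (μ := fun _ => μ)
  exact this

lemma pi_integral_single (μ : Measure ℝ) [IsProbabilityMeasure μ] {N : ℕ} (i : Fin N)
    (g : ℝ → ℝ) :
    ∫ t, g (t i) ∂(Measure.pi fun _ : Fin N => μ) = ∫ s, g s ∂μ := by
  have h : (fun t : Fin N → ℝ => g (t i)) =
      fun t => ∏ k, (fun k (s : ℝ) => if k = i then g s else 1) k (t k) := by
    funext t
    rw [Finset.prod_eq_single i (fun k _ hk => by simp [hk]) (by simp)]
    simp
  rw [h, pi_integral_prod μ (fun k (s : ℝ) => if k = i then g s else 1),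
    Finset.prod_eq_single i (fun k _ hk => by simp [hk]) (by simp)]
  simp

lemma pi_integral_pair (μ : Measure ℝ) [IsProbabilityMeasure μ] {N : ℕ} {i j : Fin N}
    (hij : i ≠ j) (g h : ℝ → ℝ) :
    ∫ t, g (t i) * h (t j) ∂(Measure.pi fun _ : Fin N => μ)
      = (∫ s, g s ∂μ) * ∫ s, h s ∂μ := by
  have key : (fun t : Fin N → ℝ => g (t i) * h (t j)) =
      fun t => ∏ k, (fun k (s : ℝ) => if k = i then g s else if k = j then h s else 1) k (t k) := by
    funext t
    rw [← Finset.prod_filter_mul_prod_filter_not Finset.univ (fun k => k = i ∨ k = j)]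
    have h1 : Finset.univ.filter (fun k : Fin N => k = i ∨ k = j) = {i, j} := by
      ext k; simp [Finset.mem_insert]
    rw [h1]
    rw [Finset.prod_pair hij]
    have h2 : ∀ k ∈ Finset.univ.filter (fun k : Fin N => ¬(k = i ∨ k = j)),
        (fun k (s : ℝ) => if k = i then g s else if k = j then h s else 1) k (t k) = 1 := by
      intro k hk
      simp only [Finset.mem_filter] at hk
      push_neg at hk
      simp [hk.2.1, hk.2.2]
    rw [Finset.prod_eq_one h2]
    simp [hij, hij.symm]
  rw [key, pi_integral_prod μ (fun k (s : ℝ) => if k = i then g s else if k = j then h s else 1)]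
  rw [← Finset.prod_filter_mul_prod_filter_not Finset.univ (fun k => k = i ∨ k = j)]
  have h1 : Finset.univ.filter (fun k : Fin N => k = i ∨ k = j) = {i, j} := by
    ext k; simp [Finset.mem_insert]
  rw [h1, Finset.prod_pair hij]
  have h2 : ∀ k ∈ Finset.univ.filter (fun k : Fin N => ¬(k = i ∨ k = j)),
      (∫ s, (fun k (s : ℝ) => if k = i then g s else if k = j then h s else 1) k s ∂μ) = 1 := by
    intro k hk
    simp only [Finset.mem_filter] at hk
    push_neg at hk
    simp [hk.2.1, hk.2.2]
  rw [Finset.prod_eq_one h2]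
  simp [hij, hij.symm]

lemma ind_eq_indicator (c : ℝ) : (fun s : ℝ => if s ≤ c then (1:ℝ) else 0)
    = Set.indicator (Set.Iic c) (fun _ => (1:ℝ)) := by
  funext s; simp [Set.indicator_apply, Set.mem_Iic]

lemma ind_integrable (μ : Measure ℝ) [IsProbabilityMeasure μ] (c : ℝ) :
    Integrable (fun s : ℝ => if s ≤ c then (1:ℝ) else 0) μ := by
  rw [ind_eq_indicator c]
  exact (integrable_const (1:ℝ)).indicator measurableSet_Iic

lemma integral_ind (μ : Measure ℝ) [IsProbabilityMeasure μ] (c : ℝ) :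
    ∫ s, (if s ≤ c then (1:ℝ) else 0) ∂μ = cdf μ c := by
  rw [show (fun s : ℝ => if s ≤ c then (1:ℝ) else 0)
      = Set.indicator (Set.Iic c) (fun _ => (1:ℝ)) from ind_eq_indicator c]
  rw [MeasureTheory.integral_indicator_const (1:ℝ) measurableSet_Iic]
  simp [cdf, Measure.real]

lemma integral_ind_sq (μ : Measure ℝ) [IsProbabilityMeasure μ] (c : ℝ) :
    ∫ s, ((if s ≤ c then (1:ℝ) else 0) - cdf μ c) ^ 2 ∂μ = cdf μ c - (cdf μ c) ^ 2 := by
  set p := cdf μ c with hp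
  have h : ∀ s : ℝ, ((if s ≤ c then (1:ℝ) else 0) - p) ^ 2
      = (if s ≤ c then (1:ℝ) else 0) * (1 - 2*p) + p ^ 2 := by
    intro s; split <;> ring
  simp_rw [h]
  rw [MeasureTheory.integral_add ((ind_integrable μ c).mul_const _) (integrable_const _)]
  rw [MeasureTheory.integral_mul_const, integral_ind μ c]
  simp only [MeasureTheory.integral_const, probReal_univ, ENNReal.toReal_one, smul_eq_mul,
    one_mul]
  ring

lemma meas_Z (p c : ℝ) : Measurable (fun s : ℝ => (if s ≤ c then (1:ℝ) else 0) - p) := by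
  apply Measurable.sub _ measurable_const
  exact Measurable.ite measurableSet_Iic measurable_const measurable_const

lemma cnt_concentration (μ : Measure ℝ) [IsProbabilityMeasure μ] (N : ℕ) (c : ℝ)
    (r : ℝ) (hr : 0 < r) :
    (Measure.pi fun _ : Fin N => μ) {t | r ≤ |cnt N c t - N * cdf μ c|}
      ≤ ENNReal.ofReal (N / (4 * r ^ 2)) := by
  set p := cdf μ c with hp
  set Z : ℝ → ℝ := fun s => (if s ≤ c then (1:ℝ) else 0) - p with hZ
  set X : (Fin N → ℝ) → ℝ := fun t => ∑ i, Z (t i) with hX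
  set π := (Measure.pi fun _ : Fin N => μ) with hπ
  have hprob : IsProbabilityMeasure π := by rw [hπ]; infer_instance
  have hXeq : ∀ t, cnt N c t - N * p = X t := by
    intro t
    simp only [hX, hZ, cnt]
    rw [Finset.sum_sub_distrib, Finset.sum_const, Finset.card_univ, Fintype.card_fin,
      nsmul_eq_mul]
  have hZb : ∀ s, |Z s| ≤ 1 + |p| := by
    intro s
    simp only [hZ]
    refine (abs_sub _ _).trans ?_
    gcongr
    split <;> simp
  have hZm : Measurable Z := meas_Z p c
  have hXm : Measurable X := by
    apply Finset.measurable_sum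
    exact fun i _ => hZm.comp (measurable_pi_apply i)
  have hXb : ∀ t, |X t| ≤ N * (1 + |p|) := by
    intro t
    refine (Finset.abs_sum_le_sum_abs _ _).trans ?_
    calc ∑ i, |Z (t i)| ≤ ∑ _i : Fin N, (1 + |p|) := Finset.sum_le_sum fun i _ => hZb _
      _ = N * (1 + |p|) := by
        rw [Finset.sum_const, Finset.card_univ, Fintype.card_fin, nsmul_eq_mul]
  have hint : Integrable (fun t => X t ^ 2) π := by
    refine Integrable.mono' (integrable_const ((N * (1 + |p|)) ^ 2))
      ((hXm.pow_const 2).aestronglyMeasurable) (ae_of_all _ fun t => ?_)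
    rw [Real.norm_eq_abs, abs_pow, sq_abs (X t), ← sq_abs (X t)]
    exact pow_le_pow_left₀ (abs_nonneg _) (hXb t) 2
  have hmom : ∫ t, X t ^ 2 ∂π = N * (p - p ^ 2) := by
    have hexp : ∀ t, X t ^ 2 = ∑ i, ∑ j, Z (t i) * Z (t j) := by
      intro t
      simp only [hX]
      rw [sq, Finset.sum_mul_sum]
    simp_rw [hexp]
    have hintij : ∀ (i j : Fin N), Integrable (fun t : Fin N → ℝ => Z (t i) * Z (t j)) π := by
      intro i j
      refine Integrable.mono' (integrable_const ((1 + |p|) * (1 + |p|)))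
        (((hZm.comp (measurable_pi_apply i)).mul
          (hZm.comp (measurable_pi_apply j))).aestronglyMeasurable)
        (ae_of_all _ fun t => ?_)
      rw [Real.norm_eq_abs, abs_mul]
      have h0 : (0:ℝ) ≤ 1 + |p| := by positivity
      exact mul_le_mul (hZb _) (hZb _) (abs_nonneg _) h0
    rw [MeasureTheory.integral_finset_sum _ (fun i _ => integrable_finset_sum _
      (fun j _ => hintij i j))]
    have hswap : ∀ i : Fin N, ∫ t, (∑ j, Z (t i) * Z (t j)) ∂π
        = ∑ j, ∫ t, Z (t i) * Z (t j) ∂π :=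
      fun i => MeasureTheory.integral_finset_sum _ (fun j _ => hintij i j)
    rw [Finset.sum_congr rfl fun i _ => hswap i]
    have hterm : ∀ i j : Fin N, ∫ t, Z (t i) * Z (t j) ∂π
        = if i = j then p - p ^ 2 else 0 := by
      intro i j
      by_cases h : i = j
      · subst h
        rw [if_pos rfl, hπ]
        rw [pi_integral_single μ i (fun s => Z s * Z s)]
        have h2 : ∫ s, Z s * Z s ∂μ = ∫ s, Z s ^ 2 ∂μ := by simp_rw [sq]
        rw [h2]
        simp only [hZ, hp]
        exact integral_ind_sq μ c
      · rw [if_neg h, hπ, pi_integral_pair μ h Z Z]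
        have hZ0 : ∫ s, Z s ∂μ = 0 := by
          simp only [hZ]
          rw [MeasureTheory.integral_sub (ind_integrable μ c) (integrable_const _)]
          rw [integral_ind μ c]
          simp [hp]
        rw [hZ0]
        simp
    calc ∑ i : Fin N, ∑ j : Fin N, ∫ t, Z (t i) * Z (t j) ∂π
        = ∑ i : Fin N, ∑ j : Fin N, if i = j then p - p ^ 2 else 0 :=
          Finset.sum_congr rfl fun i _ => Finset.sum_congr rfl fun j _ => hterm i j
      _ = ∑ _i : Fin N, (p - p ^ 2) := by
          refine Finset.sum_congr rfl fun i _ => ?_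
          rw [Finset.sum_ite_eq _ i (fun _ => p - p ^ 2)]
          simp
      _ = N * (p - p ^ 2) := by
          rw [Finset.sum_const, Finset.card_univ, Fintype.card_fin, nsmul_eq_mul]
  have hmom4 : ∫ t, X t ^ 2 ∂π ≤ N / 4 := by
    rw [hmom]
    have h14 : p - p ^ 2 ≤ 1 / 4 := by nlinarith [sq_nonneg (p - 1/2)]
    calc (N:ℝ) * (p - p ^ 2) ≤ N * (1/4) :=
          mul_le_mul_of_nonneg_left h14 (Nat.cast_nonneg N)
      _ = N / 4 := by ring
  have markov := MeasureTheory.mul_meas_ge_le_integral_of_nonneg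
    (ae_of_all π fun t => sq_nonneg (X t)) hint (r ^ 2)
  have hsub : {t | r ≤ |cnt N c t - N * p|} ⊆ {t | r ^ 2 ≤ X t ^ 2} := by
    intro t ht
    simp only [Set.mem_setOf_eq] at ht ⊢
    rw [hXeq t] at ht
    calc r ^ 2 ≤ |X t| ^ 2 := pow_le_pow_left₀ hr.le ht 2
      _ = X t ^ 2 := sq_abs _
  refine (measure_mono hsub).trans ?_
  have hne : π {t | r ^ 2 ≤ X t ^ 2} ≠ ⊤ := measure_ne_top _ _
  rw [← ENNReal.ofReal_toReal hne]
  apply ENNReal.ofReal_le_ofReal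
  have hr2 : (0:ℝ) < r ^ 2 := by positivity
  have hch : r ^ 2 * (π {t | r ^ 2 ≤ X t ^ 2}).toReal ≤ N / 4 := markov.trans hmom4
  rw [show (N:ℝ) / (4 * r ^ 2) = (N / 4) / r ^ 2 by ring, le_div_iff₀ hr2]
  linarith [hch]

lemma complete_deg (N : ℕ) (hN : 2 ≤ N) (i : Fin N) :
    (completeNetwork N hN).deg i = (N : ℝ) - 1 := by
  rw [Network.deg, completeNetwork]
  have key : ∀ j : Fin N, (if i = j then (0 : ℝ) else 1) = 1 - (if i = j then 1 else 0) := by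
    intro j; split <;> ring
  rw [Finset.sum_congr rfl fun j _ => key j, Finset.sum_sub_distrib,
    Finset.sum_const, Finset.sum_ite_eq]
  simp

lemma complete_nbr (N : ℕ) (hN : 2 ≤ N) (a : Fin N → ℝ) (i : Fin N) :
    (completeNetwork N hN).nbr a i = ((∑ j, a j) - a i) / ((N : ℝ) - 1) := by
  rw [Network.nbr, complete_deg N hN]
  congr 1
  show (∑ j, (if i = j then (0:ℝ) else 1) * a j) = (∑ j, a j) - a i
  have key : ∀ j : Fin N, (if i = j then (0 : ℝ) else 1) * a j
      = a j - (if i = j then a j else 0) := by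
    intro j; split <;> ring
  rw [Finset.sum_congr rfl fun j _ => key j, Finset.sum_sub_distrib, Finset.sum_ite_eq]
  simp

lemma complete_Av (N : ℕ) (hN : 2 ≤ N) (a : Fin N → ℝ) :
    (completeNetwork N hN).Av a = (∑ i, a i) / N := by
  have hne : (N:ℝ) - 1 ≠ 0 := by
    have : (2:ℝ) ≤ N := by exact_mod_cast hN
    linarith
  rw [Network.Av]
  have h1 : ∀ i : Fin N, (completeNetwork N hN).deg i * a i = ((N:ℝ) - 1) * a i :=
    fun i => by rw [complete_deg]
  have h2 : (∑ i : Fin N, (completeNetwork N hN).deg i) = ((N:ℝ) - 1) * N := by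
    rw [Finset.sum_congr rfl fun i _ => complete_deg N hN i, Finset.sum_const,
      Finset.card_univ, Fintype.card_fin, nsmul_eq_mul, mul_comm]
  rw [Finset.sum_congr rfl fun i _ => h1 i, h2, ← Finset.mul_sum,
    mul_div_mul_left _ _ hne]

lemma exists_upperEq (N : ℕ) (hN : 2 ≤ N) (t : Fin N → ℝ) (k : ℕ)
    (hA : (k : ℝ) ≤ cnt N (((k:ℝ) - 1)/((N:ℝ) - 1)) t)
    (hB : cnt N ((k:ℝ)/((N:ℝ) - 1)) t ≤ (k : ℝ)) :
    ∃ a : Fin N → ℝ, IsUpperEq (completeNetwork N hN) t a ∧ ∑ i, a i = (k : ℝ) := by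
  have hN1 : (0:ℝ) < (N:ℝ) - 1 := by
    have : (2:ℝ) ≤ N := by exact_mod_cast hN
    linarith
  set A := Finset.univ.filter (fun i => t i ≤ ((k:ℝ) - 1)/((N:ℝ) - 1)) with hAdef
  set B := Finset.univ.filter (fun i => t i ≤ (k:ℝ)/((N:ℝ) - 1)) with hBdef
  have hsub : A ⊆ B := by
    intro i hi
    rw [hAdef, Finset.mem_filter] at hi
    rw [hBdef, Finset.mem_filter]
    refine ⟨hi.1, hi.2.trans ?_⟩
    gcongr <;> linarith
  have hcardA : k ≤ A.card := by
    have h' := hA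
    rw [cnt_eq_card] at h'
    exact Nat.cast_le.mp h'
  have hcardB : B.card ≤ k := by
    have h' := hB
    rw [cnt_eq_card] at h'
    exact Nat.cast_le.mp h'
  have hAB : A = B := Finset.eq_of_subset_of_card_le hsub (hcardB.trans hcardA)
  have hcard : A.card = k := le_antisymm (hAB ▸ hcardB) hcardA
  refine ⟨fun i => if i ∈ A then (1:ℝ) else 0, ⟨fun i => ?_, fun i => ?_⟩, ?_⟩
  · by_cases h : i ∈ A <;> simp [h]
  · have hsum : (∑ j, if j ∈ A then (1:ℝ) else 0) = (k:ℝ) := by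
      rw [Finset.sum_boole]
      norm_cast
      rw [← hcard]
      congr 1
      ext j; simp
    rw [complete_nbr N hN _ i, hsum]
    show (if i ∈ A then (1:ℝ) else 0) = 1 ↔
      t i ≤ ((k:ℝ) - (if i ∈ A then (1:ℝ) else 0))/((N:ℝ) - 1)
    by_cases h : i ∈ A
    · rw [if_pos h]
      have hti : t i ≤ ((k:ℝ) - 1)/((N:ℝ) - 1) := by
        rw [hAdef, Finset.mem_filter] at h; exact h.2
      exact iff_of_true rfl hti
    · rw [if_neg h]
      have hti : ¬ t i ≤ (k:ℝ)/((N:ℝ) - 1) := by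
        intro hcon
        exact h (hAB ▸ (by rw [hBdef, Finset.mem_filter]; exact ⟨Finset.mem_univ i, hcon⟩))
      exact iff_of_false (by norm_num) (by rw [sub_zero]; exact hti)
  · rw [Finset.sum_boole]
    norm_cast
    rw [← hcard]
    congr 1
    ext j; simp
set_option maxHeartbeats 1000000

/-- **Theorem 1, complete graphs.** If `x` is a strongly stable fixed point
of the CDF `P` of `μ`, then for every `η > 0`, on all sufficiently large complete graphs,
with probability at least `1 − η` there is a pure upper equilibrium whose average is
within `η` of `x`. -/
theorem complete_graph_equilibrium (μ : Measure ℝ) [IsProbabilityMeasure μ] (x : ℝ)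
    (hx : x ∈ Set.Icc (0 : ℝ) 1) (hss : StronglyStable (cdf μ) x) :
    ∀ η > (0 : ℝ), ∃ N₀ : ℕ, ∀ N : ℕ, ∀ hN : N₀ + 2 ≤ N,
      ENNReal.ofReal (1 - η) ≤
        (Measure.pi fun _ : Fin N => μ)
          {t | ∃ a : Fin N → ℝ,
            IsUpperEq (completeNetwork N (by omega)) t a ∧
            |(completeNetwork N (by omega)).Av a - x| ≤ η} := by
  intro η hη
  by_cases hη1 : 1 ≤ η
  · exact ⟨0, fun N hN => by
      rw [ENNReal.ofReal_of_nonpos (by linarith)]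
      exact bot_le⟩
  push_neg at hη1
  obtain ⟨hfix, γ₀, hγ₀, ε, hε, hprop⟩ := hss
  set γ : ℝ := max γ₀ 0 with hγdef
  have hγ0 : 0 ≤ γ := le_max_right _ _
  have hγ1 : γ < 1 := max_lt hγ₀ one_pos
  set δ : ℝ := min (ε/2) (η/2) with hδdef
  have hδ : 0 < δ := lt_min (by linarith) (by linarith)
  have hδε : δ ≤ ε/2 := min_le_left _ _
  have hδη : δ ≤ η/2 := min_le_right _ _
  have hδhalf : δ < 1/2 := lt_of_le_of_lt hδη (by linarith)
  set cc : ℝ := (1 - γ) * δ / 2 with hccdef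
  have hcc : 0 < cc := by
    rw [hccdef]
    have h1 : 0 < 1 - γ := by linarith
    exact div_pos (mul_pos h1 hδ) two_pos
  have hccd : δ - γ * δ = 2 * cc := by rw [hccdef]; ring
  have hccδ : cc ≤ δ := by nlinarith
  refine ⟨⌈(4/ε + 2/δ + 5/cc + 1/(2*cc^2*η) + 2 : ℝ)⌉₊, fun N hN => ?_⟩
  have hN2 : 2 ≤ N := by omega
  have hN0 : (0:ℝ) < N := by
    have : 0 < N := by omega
    exact_mod_cast this
  have hNbig : (4/ε + 2/δ + 5/cc + 1/(2*cc^2*η) + 2 : ℝ) ≤ (N:ℝ) := by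
    calc (4/ε + 2/δ + 5/cc + 1/(2*cc^2*η) + 2 : ℝ)
        ≤ (⌈(4/ε + 2/δ + 5/cc + 1/(2*cc^2*η) + 2 : ℝ)⌉₊ : ℝ) := Nat.le_ceil _
      _ ≤ (N:ℝ) := by exact_mod_cast Nat.le_of_lt_succ (by omega)
  have ht1 : (0:ℝ) < 4/ε := by positivity
  have ht2 : (0:ℝ) < 2/δ := by positivity
  have ht3 : (0:ℝ) < 5/cc := by positivity
  have ht4 : (0:ℝ) < 1/(2*cc^2*η) := by positivity
  set M : ℝ := (N:ℝ) - 1 with hMdef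
  have hM : 0 < M := by
    rw [hMdef]
    have h2 : (2:ℝ) ≤ N := by exact_mod_cast hN2
    linarith
  have hNM : (N:ℝ) = M + 1 := by rw [hMdef]; ring
  have hMε : 4 ≤ ε * M := by
    have h1 : 4/ε ≤ M := by rw [hMdef]; linarith
    calc (4:ℝ) = ε * (4/ε) := by field_simp
      _ ≤ ε * M := by apply mul_le_mul_of_nonneg_left h1 hε.le
  have hMδ : 2 ≤ δ * M := by
    have h1 : 2/δ ≤ M := by rw [hMdef]; linarith
    calc (2:ℝ) = δ * (2/δ) := by field_simp
      _ ≤ δ * M := by apply mul_le_mul_of_nonneg_left h1 hδ.le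
  have hNcc : 5 ≤ cc * N := by
    have h1 : 5/cc ≤ (N:ℝ) := by linarith
    calc (5:ℝ) = cc * (5/cc) := by field_simp
      _ ≤ cc * N := by apply mul_le_mul_of_nonneg_left h1 hcc.le
  have hNη : 1 ≤ 2*cc^2*η*N := by
    have h1 : 1/(2*cc^2*η) ≤ (N:ℝ) := by linarith
    have h2 : (0:ℝ) < 2*cc^2*η := by positivity
    calc (1:ℝ) = (2*cc^2*η) * (1/(2*cc^2*η)) := by field_simp
      _ ≤ (2*cc^2*η) * N := by apply mul_le_mul_of_nonneg_left h1 h2.le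
  -- the two cut points
  set k₁ : ℕ := ⌈(x - δ) * N⌉₊ with hk₁def
  set k₂ : ℕ := min ⌊(x + δ) * N⌋₊ N with hk₂def
  set c₁ : ℝ := ((k₁:ℝ) - 1) / M with hc₁def
  set c₂ : ℝ := (k₂:ℝ) / M with hc₂def
  set r : ℝ := cc * N with hrdef
  have hr : 0 < r := mul_pos hcc hN0
  have hk₁N : k₁ ≤ N := by
    rw [hk₁def]
    refine Nat.ceil_le.mpr ?_
    calc (x - δ) * N ≤ 1 * N := by
          apply mul_le_mul_of_nonneg_right _ hN0.le
          linarith [hx.2]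
      _ = (N:ℝ) := by ring
  have hk₂N : k₂ ≤ N := min_le_right _ _
  have hk₂ub : (k₂:ℝ) ≤ (x + δ) * N := by
    have h1 : (k₂:ℝ) ≤ (⌊(x + δ) * N⌋₊ : ℝ) := by
      exact_mod_cast min_le_left _ _
    exact h1.trans (Nat.floor_le (mul_nonneg (by linarith [hx.1]) hN0.le))
  have hk₁k₂ : k₁ ≤ k₂ := by
    by_cases hcase : (x - δ) * N ≤ 0
    · have : k₁ = 0 := by rw [hk₁def]; exact Nat.ceil_eq_zero.mpr hcase
      omega
    push_neg at hcase
    have hub : (k₁:ℝ) < (x - δ) * N + 1 := by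
      rw [hk₁def]; exact Nat.ceil_lt_add_one hcase.le
    rcases le_total (⌊(x + δ) * N⌋₊) N with h | h
    · have hk₂eq : k₂ = ⌊(x + δ) * N⌋₊ := by rw [hk₂def]; exact min_eq_left h
      have hlb : (x + δ) * N - 1 < (k₂:ℝ) := by
        rw [hk₂eq]
        have := Nat.sub_one_lt_floor ((x + δ) * N)
        exact_mod_cast this
      have : (k₁:ℝ) < (k₂:ℝ) + 1 := by
        have e4 : (x - δ) * N = x*M - δ*M + x - δ := by rw [hNM]; ring
        have e4' : (x + δ) * N = x*M + δ*M + x + δ := by rw [hNM]; ring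
        linarith [hub, hlb, e4, e4', hMδ, hδ]
      have := Nat.cast_lt.mp (show (k₁:ℝ) < ((k₂ + 1 : ℕ):ℝ) by push_cast; linarith)
      omega
    · have : k₂ = N := by rw [hk₂def]; exact min_eq_right h
      omega
  -- the good event
  set G : Set (Fin N → ℝ) :=
    {t | (k₁:ℝ) ≤ cnt N c₁ t} ∩ {t | cnt N c₂ t ≤ (k₂:ℝ)} with hGdef
  have hGmeas : MeasurableSet G := by
    rw [hGdef]
    exact (measurableSet_le measurable_const (cnt_measurable N c₁)).inter
      (measurableSet_le (cnt_measurable N c₂) measurable_const)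
  clear_value γ δ cc M k₁ k₂ c₁ c₂ r G
  -- Step 1 : on G there is an equilibrium with average close to x
  have hsubG : G ⊆ {t | ∃ a : Fin N → ℝ,
      IsUpperEq (completeNetwork N (by omega)) t a ∧
      |(completeNetwork N (by omega)).Av a - x| ≤ η} := by
    intro t ht
    rw [hGdef] at ht
    obtain ⟨ht1, ht2⟩ := ht
    rw [Set.mem_setOf_eq] at ht1 ht2
    rw [hc₁def] at ht1
    rw [hc₂def] at ht2
    set K := (Finset.Icc k₁ k₂).filter (fun m : ℕ => cnt N ((m:ℝ)/M) t ≤ ((m:ℕ):ℝ)) with hKdef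
    have hKne : K.Nonempty := by
      refine ⟨k₂, ?_⟩
      rw [hKdef, Finset.mem_filter, Finset.mem_Icc]
      exact ⟨⟨hk₁k₂, le_rfl⟩, ht2⟩
    set k : ℕ := K.min' hKne with hkdef
    have hkmem : k ∈ K := K.min'_mem hKne
    rw [hKdef, Finset.mem_filter, Finset.mem_Icc] at hkmem
    obtain ⟨⟨hkl, hku⟩, hBk⟩ := hkmem
    have hAk : (k:ℝ) ≤ cnt N (((k:ℝ) - 1)/M) t := by
      rcases Nat.eq_or_lt_of_le hkl with heq | hlt
      · rw [← heq]
        exact ht1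
      · have hm : k - 1 ∈ Finset.Icc k₁ k₂ := Finset.mem_Icc.mpr ⟨by omega, by omega⟩
        have hmK : k - 1 ∉ K := by
          intro hmem
          have := K.min'_le _ hmem
          rw [← hkdef] at this
          omega
        rw [hKdef, Finset.mem_filter] at hmK
        push_neg at hmK
        have hgt := hmK hm
        rw [cnt_eq_card] at hgt ⊢
        have hcast : ((k - 1 : ℕ):ℝ) = (k:ℝ) - 1 := by
          push_cast [Nat.cast_sub (by omega : 1 ≤ k)]
          ring
        rw [hcast] at hgt
        have hcard := Nat.cast_lt.mp (show ((k-1:ℕ):ℝ) <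
            ((Finset.univ.filter (fun i => t i ≤ ((k:ℝ) - 1)/M)).card : ℝ) by
          rw [hcast]; exact hgt)
        have : k ≤ (Finset.univ.filter (fun i => t i ≤ ((k:ℝ) - 1)/M)).card := by omega
        exact_mod_cast this
    obtain ⟨a, haeq, hasum⟩ := exists_upperEq N hN2 t k (by rw [← hMdef]; exact hAk)
      (by rw [← hMdef]; exact hBk)
    refine ⟨a, haeq, ?_⟩
    rw [complete_Av N hN2 a, hasum]
    have hku' : (k:ℝ) ≤ (x + δ) * N := le_trans (by exact_mod_cast hku) hk₂ub
    have hupper : (k:ℝ)/N - x ≤ η := by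
      rw [div_sub' hN0.ne', div_le_iff₀ hN0]
      have e1 : (x + δ) * N = x*N + δ*N := by ring
      have e2 : δ*(N:ℝ) ≤ η*(N:ℝ) :=
        mul_le_mul_of_nonneg_right (by linarith) hN0.le
      linarith [hku', e1, e2]
    have hlower : -η ≤ (k:ℝ)/N - x := by
      by_cases hcase : (x - δ) * N ≤ 0
      · have hxδ : x ≤ δ := by nlinarith [hN0]
        have hk0 : (0:ℝ) ≤ (k:ℝ)/N := div_nonneg (Nat.cast_nonneg k) hN0.le
        linarith [hxδ, hδη, hη, hk0]
      · push_neg at hcase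
        have hlb : (x - δ) * N ≤ (k₁:ℝ) := by rw [hk₁def]; exact Nat.le_ceil _
        have hkl' : (k₁:ℝ) ≤ (k:ℝ) := by exact_mod_cast hkl
        rw [div_sub' hN0.ne', le_div_iff₀ hN0]
        have e1 : (x - δ) * N = x*N - δ*N := by ring
        have e2 : δ*(N:ℝ) ≤ η*(N:ℝ) :=
          mul_le_mul_of_nonneg_right (by linarith) hN0.le
        linarith [hlb, hkl', e1, e2]
    exact abs_le.mpr ⟨hlower, hupper⟩
  -- Step 2 : G has large probability
  have hbad₁ : (Measure.pi fun _ : Fin N => μ) {t | (k₁:ℝ) ≤ cnt N c₁ t}ᶜ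
      ≤ ENNReal.ofReal ((N:ℝ) / (4 * r ^ 2)) := by
    by_cases hcase : k₁ = 0
    · have : {t : Fin N → ℝ | (k₁:ℝ) ≤ cnt N c₁ t}ᶜ = ∅ := by
        ext t
        simp [hcase, cnt_nonneg]
      rw [this]
      simp
    -- k₁ ≥ 1 : use concentration
    have hk₁pos : 1 ≤ k₁ := by omega
    have hk₁R : (1:ℝ) ≤ (k₁:ℝ) := by exact_mod_cast hk₁pos
    have hpos : 0 < (x - δ) * N := by
      by_contra hcon
      push_neg at hcon
      exact hcase (by rw [hk₁def]; exact Nat.ceil_eq_zero.mpr hcon)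
    have hub : (k₁:ℝ) < (x - δ) * N + 1 := by
      rw [hk₁def]; exact Nat.ceil_lt_add_one hpos.le
    have hlb : (x - δ) * N ≤ (k₁:ℝ) := by rw [hk₁def]; exact Nat.le_ceil _
    have hc₁0 : 0 ≤ c₁ := by
      rw [hc₁def]
      apply div_nonneg _ hM.le
      linarith
    have hc₁M : c₁ * M = (k₁:ℝ) - 1 := by
      rw [hc₁def]; field_simp
    have e4 : (x - δ) * N = x*M - δ*M + x - δ := by rw [hNM]; ring
    have hc₁x : c₁ ≤ x := by
      rw [hc₁def, div_le_iff₀ hM]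
      linarith [hub, e4, hMδ, hx.2, hδ]
    have hdist : M * (x - c₁) ≤ δ * M + 2 := by
      have : M * (x - c₁) = M * x - ((k₁:ℝ) - 1) := by
        rw [mul_sub, mul_comm M c₁, hc₁M]
      rw [this]
      linarith [hlb, e4, hx.1, hδhalf]
    have h8 : x - c₁ ≤ ε := by
      have h7 := mul_le_mul_of_nonneg_left hδε hM.le
      have h6 : M * (x - c₁) ≤ M * ε := by linarith [hdist, h7, hMε]
      exact le_of_mul_le_mul_left h6 hM
    have habs : |c₁ - x| ≤ ε := abs_le.mpr ⟨by linarith, by linarith [hc₁x, hε]⟩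
    have hss₁ := (hprop c₁ ⟨hc₁0, hc₁x.trans hx.2⟩ habs).1 hc₁x
    rw [hfix] at hss₁
    have hss₁' : x + γ * (c₁ - x) ≤ cdf μ c₁ := by
      have h9 := mul_le_mul_of_nonpos_right (le_max_left γ₀ 0)
        (by linarith [hc₁x] : c₁ - x ≤ 0)
      rw [← hγdef] at h9
      refine le_trans (by linarith [h9]) hss₁
    have hkey : (k₁:ℝ) + r ≤ (N:ℝ) * cdf μ c₁ := by
      have hMP := mul_le_mul_of_nonneg_left hss₁' hM.le
      have hPnn := cdf_nonneg μ c₁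
      have hγd := mul_le_mul_of_nonneg_left hdist hγ0
      have step1 : M*x - γ*(δ*M + 2) ≤ M * cdf μ c₁ := by linarith [hMP, hγd]
      have e2 : (N:ℝ) * cdf μ c₁ = M * cdf μ c₁ + cdf μ c₁ := by rw [hNM]; ring
      have e3 : 2*(cc*M) = 2*(cc*(N:ℝ)) - 2*cc := by rw [hNM]; ring
      have e5 : γ*(δ*M + 2) = γ*δ*M + 2*γ := by ring
      have e6 : δ*M - γ*δ*M = 2*(cc*M) := by
        rw [show δ*M - γ*δ*M = (δ - γ*δ)*M from by ring, hccd]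
        ring
      rw [hrdef]
      linarith [hub, e4, step1, e2, e3, e5, e6, hPnn, hccδ, hγ1, hγ0, hδhalf,
        hx.2, hNcc, hδ]
    refine le_trans (measure_mono ?_) (cnt_concentration μ N c₁ r hr)
    intro t htc
    rw [Set.mem_compl_iff, Set.mem_setOf_eq, not_le] at htc
    rw [Set.mem_setOf_eq]
    refine le_abs.mpr (Or.inr ?_)
    linarith
  have hbad₂ : (Measure.pi fun _ : Fin N => μ) {t | cnt N c₂ t ≤ (k₂:ℝ)}ᶜ
      ≤ ENNReal.ofReal ((N:ℝ) / (4 * r ^ 2)) := by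
    by_cases hcase : k₂ = N
    · have : {t : Fin N → ℝ | cnt N c₂ t ≤ (k₂:ℝ)}ᶜ = ∅ := by
        ext t
        simp only [Set.mem_compl_iff, Set.mem_setOf_eq, not_le, Set.mem_empty_iff_false,
          iff_false, not_lt, hcase]
        exact cnt_le N c₂ t
      rw [this]
      simp
    have hk₂lt : k₂ < N := lt_of_le_of_ne hk₂N hcase
    have hfl : ⌊(x + δ) * N⌋₊ < N := by
      rcases lt_or_ge (⌊(x + δ) * N⌋₊) N with h | h
      · exact h
      · exfalso; exact hcase (by rw [hk₂def]; exact min_eq_right h)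
    have hk₂eq : k₂ = ⌊(x + δ) * N⌋₊ := by rw [hk₂def]; exact min_eq_left hfl.le
    have hlb : (x + δ) * N - 1 < (k₂:ℝ) := by
      rw [hk₂eq]
      exact_mod_cast Nat.sub_one_lt_floor ((x + δ) * N)
    have hk₂M : (k₂:ℝ) ≤ M := by
      rw [hMdef]
      have : (k₂:ℝ) < (N:ℝ) := by exact_mod_cast hk₂lt
      have h2 : ((k₂:ℕ):ℝ) + 1 ≤ ((N:ℕ):ℝ) := by exact_mod_cast hk₂lt
      linarith
    have hc₂M : c₂ * M = (k₂:ℝ) := by rw [hc₂def]; field_simp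
    have e4 : (x + δ) * N = x*M + δ*M + x + δ := by rw [hNM]; ring
    have hc₂x : x ≤ c₂ := by
      rw [hc₂def, le_div_iff₀ hM]
      linarith [hlb, e4, hMδ, hx.1, hδ]
    have hc₂1 : c₂ ≤ 1 := by
      rw [hc₂def, div_le_one hM]
      exact hk₂M
    have hdist : M * (c₂ - x) ≤ δ * M + 2 := by
      have he : M * (c₂ - x) = (k₂:ℝ) - M * x := by
        rw [mul_sub, mul_comm M c₂, hc₂M]
      rw [he]
      linarith [hk₂ub, e4, hx.2, hδhalf]
    have h8 : c₂ - x ≤ ε := by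
      have h7 := mul_le_mul_of_nonneg_left hδε hM.le
      have h6 : M * (c₂ - x) ≤ M * ε := by linarith [hdist, h7, hMε]
      exact le_of_mul_le_mul_left h6 hM
    have habs : |c₂ - x| ≤ ε := abs_le.mpr ⟨by linarith [hc₂x, hε], h8⟩
    have hss₂ := (hprop c₂ ⟨hx.1.trans hc₂x, hc₂1⟩ habs).2 hc₂x
    rw [hfix] at hss₂
    have hss₂' : cdf μ c₂ ≤ x + γ * (c₂ - x) := by
      have h9 := mul_le_mul_of_nonneg_right (le_max_left γ₀ 0)
        (by linarith [hc₂x] : 0 ≤ c₂ - x)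
      rw [← hγdef] at h9
      refine le_trans hss₂ (by linarith [h9])
    have hkey : (N:ℝ) * cdf μ c₂ + r ≤ (k₂:ℝ) := by
      have hMP := mul_le_mul_of_nonneg_left hss₂' hM.le
      have hP1 := cdf_le_one μ c₂
      have hγd := mul_le_mul_of_nonneg_left hdist hγ0
      have step1 : M * cdf μ c₂ ≤ M*x + γ*(δ*M + 2) := by linarith [hMP, hγd]
      have e2 : (N:ℝ) * cdf μ c₂ = M * cdf μ c₂ + cdf μ c₂ := by rw [hNM]; ring
      have e3 : 2*(cc*M) = 2*(cc*(N:ℝ)) - 2*cc := by rw [hNM]; ring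
      have e5 : γ*(δ*M + 2) = γ*δ*M + 2*γ := by ring
      have e6 : δ*M - γ*δ*M = 2*(cc*M) := by
        rw [show δ*M - γ*δ*M = (δ - γ*δ)*M from by ring, hccd]
        ring
      rw [hrdef]
      linarith [hlb, e4, step1, e2, e3, e5, e6, hP1, hccδ, hγ1, hγ0, hδhalf,
        hx.1, hNcc, hδ]
    refine le_trans (measure_mono ?_) (cnt_concentration μ N c₂ r hr)
    intro t htc
    rw [Set.mem_compl_iff, Set.mem_setOf_eq, not_le] at htc
    rw [Set.mem_setOf_eq]
    refine le_abs.mpr (Or.inl ?_)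
    linarith
  have hGc : (Measure.pi fun _ : Fin N => μ) Gᶜ ≤ ENNReal.ofReal η := by
    have hsplit : Gᶜ ⊆ {t | (k₁:ℝ) ≤ cnt N c₁ t}ᶜ ∪ {t | cnt N c₂ t ≤ (k₂:ℝ)}ᶜ := by
      rw [hGdef, Set.compl_inter]
    calc (Measure.pi fun _ : Fin N => μ) Gᶜ
        ≤ (Measure.pi fun _ : Fin N => μ) ({t | (k₁:ℝ) ≤ cnt N c₁ t}ᶜ
            ∪ {t | cnt N c₂ t ≤ (k₂:ℝ)}ᶜ) := measure_mono hsplit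
      _ ≤ (Measure.pi fun _ : Fin N => μ) {t | (k₁:ℝ) ≤ cnt N c₁ t}ᶜ
            + (Measure.pi fun _ : Fin N => μ) {t | cnt N c₂ t ≤ (k₂:ℝ)}ᶜ := measure_union_le _ _
      _ ≤ ENNReal.ofReal ((N:ℝ) / (4 * r ^ 2)) + ENNReal.ofReal ((N:ℝ) / (4 * r ^ 2)) :=
          add_le_add hbad₁ hbad₂
      _ = ENNReal.ofReal ((N:ℝ) / (4 * r ^ 2) + (N:ℝ) / (4 * r ^ 2)) :=
          (ENNReal.ofReal_add (by positivity) (by positivity)).symm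
      _ ≤ ENNReal.ofReal η := by
          apply ENNReal.ofReal_le_ofReal
          have he : (N:ℝ) / (4 * r ^ 2) + (N:ℝ) / (4 * r ^ 2) = 1 / (2 * cc^2 * N) := by
            rw [hrdef]
            field_simp
            ring
          rw [he]
          rw [div_le_iff₀ (by positivity)]
          linarith [hNη]
  have hprobG : IsProbabilityMeasure (Measure.pi fun _ : Fin N => μ) := by infer_instance
  calc ENNReal.ofReal (1 - η)
      = 1 - ENNReal.ofReal η := by
        rw [← ENNReal.ofReal_one, ← ENNReal.ofReal_sub _ hη.le]
    _ ≤ 1 - (Measure.pi fun _ : Fin N => μ) Gᶜ := tsub_le_tsub_left hGc _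
    _ = (Measure.pi fun _ : Fin N => μ) G := by
        have := measure_compl (μ := Measure.pi fun _ : Fin N => μ) hGmeas.compl
          (measure_ne_top _ _)
        rw [compl_compl, measure_univ] at this
        rw [this]
    _ ≤ _ := measure_mono hsubG
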